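/- Under the Mallows model, the indicator of a pairwise inversion depends only on the rank gap: for any i₁ > j₁ and i₂ > j₂ with i₁ − j₁ = i₂ − j₂, Pr(σ(σ₀⁻¹(i₁)) > σ(σ₀⁻¹(j₁))) = Pr(σ(σ₀⁻¹(i₂)) > σ(σ₀⁻¹(j₂))). -/

import Mathlib

def kendallTau {N : ℕ} (σ₁ σ₂ : Equiv.Perm (Fin N)) : ℕ :=
  (Finset.univ.filter fun p : Fin N × Fin N =>
    p.1 < p.2 ∧ ((σ₁ p.1 < σ₁ p.2 ∧ σ₂ p.2 < σ₂ p.1) ∨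
                 (σ₁ p.2 < σ₁ p.1 ∧ σ₂ p.1 < σ₂ p.2))).card

/-- The Mallows normalization constant. -/
noncomputable def mallowsZ (N : ℕ) (φ : ℝ) (σ₀ : Equiv.Perm (Fin N)) : ℝ :=
  ∑ σ : Equiv.Perm (Fin N), φ ^ kendallTau σ₀ σ

/-- Probability of an event under the Mallows distribution with center `σ₀`. -/
noncomputable def mallowsProb (N : ℕ) (φ : ℝ) (σ₀ : Equiv.Perm (Fin N))
    (E : Equiv.Perm (Fin N) → Prop) [DecidablePred E] : ℝ :=
  (∑ σ ∈ Finset.univ.filter E, φ ^ kendallTau σ₀ σ) / mallowsZ N φ σ₀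

theorem Equiv.Perm.apply_inv_self {α : Type*} (e : Equiv.Perm α) (x : α) : e (e⁻¹ x) = x :=
  e.apply_symm_apply x

theorem Equiv.Perm.inv_apply_self {α : Type*} (e : Equiv.Perm α) (x : α) : e⁻¹ (e x) = x :=
  e.symm_apply_apply x

namespace MallowsGapAux

open Finset Equiv

/-- Number of inversions (Kendall tau distance to the identity). -/
def inv' {n : ℕ} (τ : Equiv.Perm (Fin n)) : ℕ :=
  (Finset.univ.filter fun p : Fin n × Fin n => p.1 < p.2 ∧ τ p.2 < τ p.1).card

lemma kendallTau_center {n : ℕ} (σ₀ τ : Equiv.Perm (Fin n)) :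
    kendallTau σ₀ (τ * σ₀) = inv' τ := by
  classical
  unfold kendallTau inv'
  refine Finset.card_bij'
    (fun p _ => if σ₀ p.1 < σ₀ p.2 then (σ₀ p.1, σ₀ p.2) else (σ₀ p.2, σ₀ p.1))
    (fun q _ => if σ₀⁻¹ q.1 < σ₀⁻¹ q.2 then (σ₀⁻¹ q.1, σ₀⁻¹ q.2) else (σ₀⁻¹ q.2, σ₀⁻¹ q.1))
    ?_ ?_ ?_ ?_
  · rintro ⟨p1, p2⟩ hp
    rw [Finset.mem_filter] at hp ⊢
    simp only [Finset.mem_filter, Finset.mem_univ, true_and, Equiv.Perm.mul_apply] at hp ⊢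
    obtain ⟨h12, hor⟩ := hp
    split_ifs with h
    · rcases hor with ⟨_, hv⟩ | ⟨hlt, _⟩
      · exact ⟨h, hv⟩
      · exact absurd h (not_lt.mpr hlt.le)
    · have h' : σ₀ p2 < σ₀ p1 := by
        rcases lt_or_gt_of_ne (fun hh => (ne_of_lt h12) (σ₀.injective hh)) with h1 | h1
        · exact absurd h1 h
        · exact h1
      rcases hor with ⟨hlt, _⟩ | ⟨_, hv⟩
      · exact absurd hlt (not_lt.mpr h'.le)
      · exact ⟨h', hv⟩
  · rintro ⟨q1, q2⟩ hq
    rw [Finset.mem_filter] at hq ⊢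
    simp only [Finset.mem_filter, Finset.mem_univ, true_and, Equiv.Perm.mul_apply] at hq ⊢
    obtain ⟨h12, hv⟩ := hq
    split_ifs with h
    · refine ⟨h, Or.inl ?_⟩
      simp only [Equiv.Perm.apply_inv_self]
      exact ⟨h12, hv⟩
    · have h' : σ₀⁻¹ q2 < σ₀⁻¹ q1 := by
        rcases lt_or_gt_of_ne (fun hh => (ne_of_lt h12) (σ₀⁻¹.injective hh)) with h1 | h1
        · exact absurd h1 h
        · exact h1
      refine ⟨h', Or.inr ?_⟩
      simp only [Equiv.Perm.apply_inv_self]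
      exact ⟨h12, hv⟩
  · rintro ⟨p1, p2⟩ hp
    simp only [Finset.mem_filter, Finset.mem_univ, true_and] at hp
    obtain ⟨h12, _⟩ := hp
    dsimp only
    split_ifs with h h2 h2 <;>
      simp only [Equiv.Perm.inv_apply_self] at h2 ⊢ <;>
      first
        | rfl
        | exact absurd h12 h2
        | exact absurd h12 (not_lt.mpr h2.le)
  · rintro ⟨q1, q2⟩ hq
    simp only [Finset.mem_filter, Finset.mem_univ, true_and] at hq
    obtain ⟨h12, _⟩ := hq
    dsimp only
    split_ifs with h h2 h2 <;>
      simp only [Equiv.Perm.apply_inv_self] at h2 ⊢ <;>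
      first
        | rfl
        | exact absurd h12 h2
        | exact absurd h12 (not_lt.mpr h2.le)

section Window

variable {n : ℕ} (j m : ℕ) (hjm : j + m ≤ n)

/-- Membership in the window of positions `[j, j+m)`. -/
def wp (x : Fin n) : Prop := j ≤ x.val ∧ x.val < j + m

instance : DecidablePred (wp (n := n) j m) := fun _ => instDecidableAnd

/-- The `a`-th position of the window. -/
def pos (a : Fin m) : Fin n := ⟨j + a.val, by have := a.isLt; omega⟩

lemma wp_pos (a : Fin m) : wp j m (pos j m hjm a) := by
  have := a.isLt
  constructor <;> (simp only [pos]; omega)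

/-- The window positions as an equiv with a subtype. -/
def eW : Fin m ≃ {x : Fin n // wp j m x} where
  toFun a := ⟨pos j m hjm a, wp_pos j m hjm a⟩
  invFun x := ⟨x.1.val - j, by have := x.2; unfold wp at this; omega⟩
  left_inv a := by ext; simp [pos]
  right_inv x := by
    have := x.2
    unfold wp at this
    ext
    simp [pos]
    omega

/-- The permutation of `Fin n` acting as `π` inside the window and identity outside. -/
def uW (π : Equiv.Perm (Fin m)) : Equiv.Perm (Fin n) :=
  π.extendDomain (eW j m hjm)

lemma uW_pos (π : Equiv.Perm (Fin m)) (a : Fin m) :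
    uW j m hjm π (pos j m hjm a) = pos j m hjm (π a) :=
  π.extendDomain_apply_image (eW j m hjm) a

lemma uW_not_mem (π : Equiv.Perm (Fin m)) {x : Fin n} (hx : ¬ wp j m x) :
    uW j m hjm π x = x :=
  π.extendDomain_apply_not_subtype (eW j m hjm) hx

lemma uW_mem (π : Equiv.Perm (Fin m)) {x : Fin n} (hx : wp j m x) :
    wp j m (uW j m hjm π x) := by
  unfold uW
  rw [Equiv.Perm.extendDomain_apply_subtype _ _ hx]
  exact ((eW j m hjm) (π ((eW j m hjm).symm ⟨x, hx⟩))).2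

lemma uW_mul (π π' : Equiv.Perm (Fin m)) :
    uW j m hjm π * uW j m hjm π' = uW j m hjm (π * π') :=
  Equiv.Perm.extendDomain_mul _ _ _

lemma uW_one : uW j m hjm 1 = 1 := Equiv.Perm.extendDomain_one _

/-- `c` is sorted on the window. -/
def SortedW (c : Equiv.Perm (Fin n)) : Prop :=
  StrictMono fun a : Fin m => c (pos j m hjm a)

lemma uW_wp_iff (π : Equiv.Perm (Fin m)) (x : Fin n) :
    wp j m (uW j m hjm π x) ↔ wp j m x := by
  constructor
  · intro h
    by_contra hx
    rw [uW_not_mem j m hjm π hx] at h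
    exact hx h
  · exact uW_mem j m hjm π

lemma pos_lt_pos {a b : Fin m} : pos j m hjm a < pos j m hjm b ↔ a < b := by
  rw [Fin.lt_def, Fin.lt_def]
  show j + a.val < j + b.val ↔ a.val < b.val
  omega

def idxOf (x : Fin n) (hx : wp j m x) : Fin m := ⟨x.val - j, by obtain ⟨h1, h2⟩ := hx; omega⟩

lemma pos_idxOf (x : Fin n) (hx : wp j m x) : pos j m hjm (idxOf j m x hx) = x := by
  obtain ⟨h1, h2⟩ := hx
  ext
  simp only [pos, idxOf]
  omega

lemma idxOf_pos (a : Fin m) (hx : wp j m (pos j m hjm a)) :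
    idxOf j m (pos j m hjm a) hx = a := by
  ext
  show j + a.val - j = a.val
  omega

lemma uW_inv (π : Equiv.Perm (Fin m)) :
    (uW j m hjm π)⁻¹ = uW j m hjm π⁻¹ := by
  apply inv_eq_of_mul_eq_one_right
  rw [uW_mul, mul_inv_cancel, uW_one]

lemma uW_lt (π : Equiv.Perm (Fin m)) {q1 q2 : Fin n} (h12 : q1 < q2)
    (hnot : ¬(wp j m q1 ∧ wp j m q2)) :
    uW j m hjm π q1 < uW j m hjm π q2 := by
  have hv12 : q1.val < q2.val := h12
  by_cases w1 : wp j m q1 <;> by_cases w2 : wp j m q2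
  · exact absurd ⟨w1, w2⟩ hnot
  · rw [uW_not_mem j m hjm π w2]
    have h1 := uW_mem j m hjm π w1
    obtain ⟨ha, hb⟩ := h1
    obtain ⟨hc', hd⟩ := w1
    have : ¬(j ≤ q2.val ∧ q2.val < j + m) := w2
    exact Fin.lt_def.mpr (by omega)
  · rw [uW_not_mem j m hjm π w1]
    have h2 := uW_mem j m hjm π w2
    obtain ⟨ha, hb⟩ := h2
    obtain ⟨hc', hd⟩ := w2
    have : ¬(j ≤ q1.val ∧ q1.val < j + m) := w1
    exact Fin.lt_def.mpr (by omega)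
  · rw [uW_not_mem j m hjm π w1, uW_not_mem j m hjm π w2]
    exact h12

lemma inv'_mul_uW (c : Equiv.Perm (Fin n)) (hc : SortedW j m hjm c)
    (π : Equiv.Perm (Fin m)) :
    inv' (c * uW j m hjm π) = inv' c + inv' π := by
  classical
  set u := uW j m hjm π with hu
  have hcu : ∀ x, (c * u) x = c (u x) := fun x => rfl
  have split : ∀ τ : Equiv.Perm (Fin n), inv' τ =
      ((Finset.univ.filter fun p : Fin n × Fin n => p.1 < p.2 ∧ τ p.2 < τ p.1).filter
        fun q => wp j m q.1 ∧ wp j m q.2).card +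
      ((Finset.univ.filter fun p : Fin n × Fin n => p.1 < p.2 ∧ τ p.2 < τ p.1).filter
        fun q => ¬(wp j m q.1 ∧ wp j m q.2)).card := by
    intro τ
    exact (Finset.card_filter_add_card_filter_not _).symm
  have hin : ((Finset.univ.filter fun p : Fin n × Fin n =>
        p.1 < p.2 ∧ (c * u) p.2 < (c * u) p.1).filter
        fun q => wp j m q.1 ∧ wp j m q.2).card = inv' π := by
    unfold inv'
    refine Finset.card_bij'
      (fun q hq => (idxOf j m q.1 ((Finset.mem_filter.1 hq).2).1,
                    idxOf j m q.2 ((Finset.mem_filter.1 hq).2).2))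
      (fun a _ => (pos j m hjm a.1, pos j m hjm a.2)) ?_ ?_ ?_ ?_
    · rintro ⟨q1, q2⟩ hq
      have h2 := (Finset.mem_filter.1 hq).2
      have h1 := Finset.mem_filter.1 (Finset.mem_filter.1 hq).1
      obtain ⟨-, h12, hv⟩ := h1
      simp only [Finset.mem_filter, Finset.mem_univ, true_and]
      set a := idxOf j m q1 h2.1 with hadef
      set b := idxOf j m q2 h2.2 with hbdef
      have hq1 : q1 = pos j m hjm a := (pos_idxOf j m hjm q1 h2.1).symm
      have hq2 : q2 = pos j m hjm b := (pos_idxOf j m hjm q2 h2.2).symm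
      rw [hq1, hq2] at h12 hv
      refine ⟨(pos_lt_pos j m hjm).mp h12, ?_⟩
      rw [hcu, hcu, hu, uW_pos, uW_pos] at hv
      exact hc.lt_iff_lt.mp hv
    · rintro ⟨a, b⟩ hab
      simp only [Finset.mem_filter, Finset.mem_univ, true_and] at hab ⊢
      obtain ⟨hab1, hab2⟩ := hab
      refine ⟨⟨(pos_lt_pos j m hjm).mpr hab1, ?_⟩, wp_pos j m hjm a, wp_pos j m hjm b⟩
      rw [hcu, hcu, hu, uW_pos, uW_pos]
      exact hc hab2
    · rintro ⟨q1, q2⟩ hq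
      have h2 := (Finset.mem_filter.1 hq).2
      simp only [pos_idxOf]
    · rintro ⟨a, b⟩ hab
      simp only [idxOf_pos]
  have hout : ((Finset.univ.filter fun p : Fin n × Fin n =>
        p.1 < p.2 ∧ (c * u) p.2 < (c * u) p.1).filter
        fun q => ¬(wp j m q.1 ∧ wp j m q.2)).card =
      ((Finset.univ.filter fun p : Fin n × Fin n =>
        p.1 < p.2 ∧ c p.2 < c p.1).filter
        fun q => ¬(wp j m q.1 ∧ wp j m q.2)).card := by
    refine Finset.card_nbij' (fun q => (u q.1, u q.2)) (fun q => (u⁻¹ q.1, u⁻¹ q.2)) ?_ ?_ ?_ ?_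
    · rintro ⟨q1, q2⟩ hq
      simp only [Finset.mem_coe] at hq ⊢
      rw [Finset.mem_filter, Finset.mem_filter] at hq ⊢
      simp only [Finset.mem_filter, Finset.mem_univ, true_and] at hq ⊢
      obtain ⟨⟨h12, hv⟩, hnot⟩ := hq
      refine ⟨⟨uW_lt j m hjm π h12 hnot, hv⟩, ?_⟩
      rw [hu, uW_wp_iff, uW_wp_iff]
      exact hnot
    · rintro ⟨q1, q2⟩ hq
      simp only [Finset.mem_coe] at hq ⊢
      rw [Finset.mem_filter, Finset.mem_filter] at hq ⊢
      simp only [Finset.mem_filter, Finset.mem_univ, true_and] at hq ⊢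
      obtain ⟨⟨h12, hv⟩, hnot⟩ := hq
      rw [hu, uW_inv]
      have huu : ∀ x : Fin n, u ((uW j m hjm π⁻¹) x) = x := by
        intro x
        rw [hu, ← Equiv.Perm.mul_apply, uW_mul, mul_inv_cancel, uW_one, Equiv.Perm.one_apply]
      refine ⟨⟨uW_lt j m hjm π⁻¹ h12 hnot, ?_⟩, ?_⟩
      · show c (u ((uW j m hjm π⁻¹) q2)) < c (u ((uW j m hjm π⁻¹) q1))
        rw [huu, huu]
        exact hv
      · rw [uW_wp_iff, uW_wp_iff]
        exact hnot
    · rintro ⟨q1, q2⟩ _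
      simp [Equiv.Perm.inv_apply_self]
    · rintro ⟨q1, q2⟩ _
      simp [Equiv.Perm.apply_inv_self]
  have hzero : ((Finset.univ.filter fun p : Fin n × Fin n =>
        p.1 < p.2 ∧ c p.2 < c p.1).filter
        fun q => wp j m q.1 ∧ wp j m q.2).card = 0 := by
    rw [Finset.card_eq_zero, Finset.eq_empty_iff_forall_notMem]
    rintro ⟨q1, q2⟩ hq
    simp only [Finset.mem_filter, Finset.mem_univ, true_and] at hq
    obtain ⟨⟨h12, hv⟩, w1, w2⟩ := hq
    have hq1 : q1 = pos j m hjm (idxOf j m q1 w1) := (pos_idxOf j m hjm q1 w1).symm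
    have hq2 : q2 = pos j m hjm (idxOf j m q2 w2) := (pos_idxOf j m hjm q2 w2).symm
    rw [hq1, hq2] at h12 hv
    have := hc ((pos_lt_pos j m hjm).mp h12)
    exact absurd hv (not_lt.mpr this.le)
  have e1 := split (c * u)
  have e2 := split c
  rw [hin, hout] at e1
  rw [hzero] at e2
  omega

/-- The values of `τ` along the window. -/
def gfun (τ : Equiv.Perm (Fin n)) : Fin m → Fin n := fun a => τ (pos j m hjm a)

/-- The window pattern of `τ`. -/
def patt (τ : Equiv.Perm (Fin n)) : Equiv.Perm (Fin m) :=
  (Tuple.sort (gfun j m hjm τ))⁻¹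

/-- `τ` with the window sorted. -/
def sortOf (τ : Equiv.Perm (Fin n)) : Equiv.Perm (Fin n) :=
  τ * uW j m hjm (Tuple.sort (gfun j m hjm τ))

lemma sorted_sortOf (τ : Equiv.Perm (Fin n)) : SortedW j m hjm (sortOf j m hjm τ) := by
  have hmono : Monotone (gfun j m hjm τ ∘ Tuple.sort (gfun j m hjm τ)) :=
    Tuple.monotone_sort _
  have hinj : Function.Injective (gfun j m hjm τ ∘ Tuple.sort (gfun j m hjm τ)) := by
    apply Function.Injective.comp
    · intro a b hab
      have : pos j m hjm a = pos j m hjm b := τ.injective hab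
      ext
      have := congrArg Fin.val this
      simp only [pos] at this
      omega
    · exact (Tuple.sort _).injective
  have : StrictMono (gfun j m hjm τ ∘ Tuple.sort (gfun j m hjm τ)) :=
    hmono.strictMono_of_injective hinj
  intro a b hab
  show (sortOf j m hjm τ) (pos j m hjm a) < (sortOf j m hjm τ) (pos j m hjm b)
  unfold sortOf
  rw [Equiv.Perm.mul_apply, Equiv.Perm.mul_apply, uW_pos, uW_pos]
  exact this hab

lemma sortOf_mul_patt (τ : Equiv.Perm (Fin n)) :
    sortOf j m hjm τ * uW j m hjm (patt j m hjm τ) = τ := by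
  unfold sortOf patt
  rw [mul_assoc, uW_mul, mul_inv_cancel, uW_one, mul_one]

lemma patt_sortOf_spec (c : Equiv.Perm (Fin n)) (hc : SortedW j m hjm c)
    (π : Equiv.Perm (Fin m)) :
    patt j m hjm (c * uW j m hjm π) = π ∧ sortOf j m hjm (c * uW j m hjm π) = c := by
  have hg : ∀ a, gfun j m hjm (c * uW j m hjm π) a = c (pos j m hjm (π a)) := by
    intro a
    unfold gfun
    rw [Equiv.Perm.mul_apply, uW_pos]
  have hsort : Tuple.sort (gfun j m hjm (c * uW j m hjm π)) = π⁻¹ := by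
    symm
    rw [Tuple.eq_sort_iff]
    constructor
    · intro a b hab
      show gfun j m hjm _ (π⁻¹ a) ≤ gfun j m hjm _ (π⁻¹ b)
      rw [hg, hg, Equiv.Perm.apply_inv_self, Equiv.Perm.apply_inv_self]
      exact (hc.monotone hab)
    · intro a b hab heq
      exfalso
      rw [hg, hg, Equiv.Perm.apply_inv_self, Equiv.Perm.apply_inv_self] at heq
      have : pos j m hjm a = pos j m hjm b := c.injective heq
      have hv := congrArg Fin.val this
      simp only [pos] at hv
      have : a = b := by ext; omega
      exact absurd this (ne_of_lt hab)
  constructor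
  · unfold patt
    rw [hsort, inv_inv]
  · unfold sortOf
    rw [hsort, mul_assoc, uW_mul, mul_inv_cancel, uW_one, mul_one]

instance : DecidablePred (SortedW j m hjm) := fun c =>
  decidable_of_iff (∀ a b : Fin m, a < b → c (pos j m hjm a) < c (pos j m hjm b))
    ⟨fun h a b hab => h a b hab, fun h a b hab => h hab⟩

lemma sum_decomp (g : Equiv.Perm (Fin n) → ℝ) :
    ∑ τ : Equiv.Perm (Fin n), g τ =
      ∑ c ∈ Finset.univ.filter (SortedW j m hjm),
        ∑ π : Equiv.Perm (Fin m), g (c * uW j m hjm π) := by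
  rw [← Finset.sum_product']
  refine Finset.sum_nbij' (fun τ => (sortOf j m hjm τ, patt j m hjm τ))
      (fun x => x.1 * uW j m hjm x.2) ?_ ?_ ?_ ?_ ?_
  · intro τ _
    simp only [Finset.mem_product, Finset.mem_filter, Finset.mem_univ, true_and, and_true]
    exact sorted_sortOf j m hjm τ
  · intro x _
    exact Finset.mem_univ _
  · intro τ _
    exact sortOf_mul_patt j m hjm τ
  · intro x hx
    simp only [Finset.mem_product, Finset.mem_filter, Finset.mem_univ, true_and, and_true] at hx
    obtain ⟨h1, h2⟩ := patt_sortOf_spec j m hjm x.1 hx x.2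
    exact Prod.ext h2 h1
  · intro τ _
    rw [sortOf_mul_patt]

lemma sortedW_one : SortedW j m hjm 1 := by
  intro a b hab
  show (pos j m hjm a) < (pos j m hjm b)
  exact (pos_lt_pos j m hjm).mpr hab

lemma ratio_eq (φ : ℝ) (hφ0 : 0 < φ) (h0 : 0 < m) :
    (∑ τ ∈ Finset.univ.filter (fun τ : Equiv.Perm (Fin n) =>
        τ (pos j m hjm ⟨0, h0⟩) < τ (pos j m hjm ⟨m - 1, by omega⟩)), φ ^ inv' τ) /
      (∑ τ : Equiv.Perm (Fin n), φ ^ inv' τ) =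
    (∑ π ∈ Finset.univ.filter (fun π : Equiv.Perm (Fin m) =>
        π ⟨0, h0⟩ < π ⟨m - 1, by omega⟩), φ ^ inv' π) /
      (∑ π : Equiv.Perm (Fin m), φ ^ inv' π) := by
  classical
  set a0 : Fin m := ⟨0, h0⟩ with ha0
  set a1 : Fin m := ⟨m - 1, by omega⟩ with ha1
  set C : ℝ := ∑ c ∈ Finset.univ.filter (SortedW j m hjm), φ ^ inv' c with hCdef
  set Q : ℝ := ∑ π ∈ Finset.univ.filter
      (fun π : Equiv.Perm (Fin m) => π a0 < π a1), φ ^ inv' π with hQdef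
  set P : ℝ := ∑ π : Equiv.Perm (Fin m), φ ^ inv' π with hPdef
  have hnum : (∑ τ ∈ Finset.univ.filter (fun τ : Equiv.Perm (Fin n) =>
      τ (pos j m hjm a0) < τ (pos j m hjm a1)), φ ^ inv' τ) = C * Q := by
    rw [Finset.sum_filter, sum_decomp j m hjm
      (fun τ => if τ (pos j m hjm a0) < τ (pos j m hjm a1) then φ ^ inv' τ else 0),
      hCdef, Finset.sum_mul]
    apply Finset.sum_congr rfl
    intro c hcmem
    have hcs : SortedW j m hjm c := (Finset.mem_filter.1 hcmem).2
    rw [hQdef, Finset.sum_filter, Finset.mul_sum]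
    apply Finset.sum_congr rfl
    intro π _
    have hcond : ((c * uW j m hjm π) (pos j m hjm a0) < (c * uW j m hjm π) (pos j m hjm a1))
        ↔ (π a0 < π a1) := by
      rw [Equiv.Perm.mul_apply, Equiv.Perm.mul_apply, uW_pos, uW_pos]
      exact hcs.lt_iff_lt
    rw [inv'_mul_uW j m hjm c hcs π, pow_add]
    by_cases h : π a0 < π a1
    · rw [if_pos (hcond.mpr h), if_pos h]
    · rw [if_neg (fun hh => h (hcond.mp hh)), if_neg h, mul_zero]
  have hden : (∑ τ : Equiv.Perm (Fin n), φ ^ inv' τ) = C * P := by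
    rw [sum_decomp j m hjm (fun τ => φ ^ inv' τ), hCdef, Finset.sum_mul]
    apply Finset.sum_congr rfl
    intro c hcmem
    have hcs : SortedW j m hjm c := (Finset.mem_filter.1 hcmem).2
    rw [hPdef, Finset.mul_sum]
    apply Finset.sum_congr rfl
    intro π _
    rw [inv'_mul_uW j m hjm c hcs π, pow_add]
  have hCpos : 0 < C := by
    apply Finset.sum_pos
    · intro c _
      exact pow_pos hφ0 _
    · exact ⟨1, Finset.mem_filter.2 ⟨Finset.mem_univ _, sortedW_one j m hjm⟩⟩
  rw [hnum, hden, mul_div_mul_left _ _ (ne_of_gt hCpos)]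

end Window

lemma reduce_prob (N : ℕ) (φ : ℝ) (σ₀ : Equiv.Perm (Fin N)) (jj ii : Fin N) :
    mallowsProb N φ σ₀ (fun σ => σ (σ₀⁻¹ jj) < σ (σ₀⁻¹ ii)) =
      (∑ τ ∈ Finset.univ.filter (fun τ : Equiv.Perm (Fin N) => τ jj < τ ii), φ ^ inv' τ) /
        (∑ τ : Equiv.Perm (Fin N), φ ^ inv' τ) := by
  classical
  have hZ : (∑ τ : Equiv.Perm (Fin N), φ ^ inv' τ) = mallowsZ N φ σ₀ := by
    unfold mallowsZ
    refine Fintype.sum_equiv (Equiv.mulRight σ₀) _ _ (fun τ => ?_)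
    show φ ^ inv' τ = φ ^ kendallTau σ₀ (τ * σ₀)
    rw [kendallTau_center]
  have hnum : (∑ σ ∈ Finset.univ.filter
        (fun σ : Equiv.Perm (Fin N) => σ (σ₀⁻¹ jj) < σ (σ₀⁻¹ ii)), φ ^ kendallTau σ₀ σ) =
      (∑ τ ∈ Finset.univ.filter (fun τ : Equiv.Perm (Fin N) => τ jj < τ ii), φ ^ inv' τ) := by
    rw [Finset.sum_filter, Finset.sum_filter]
    refine (Fintype.sum_equiv (Equiv.mulRight σ₀) _ _ (fun τ => ?_)).symm
    show (if τ jj < τ ii then φ ^ inv' τ else 0) =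
      (if (τ * σ₀) (σ₀⁻¹ jj) < (τ * σ₀) (σ₀⁻¹ ii) then φ ^ kendallTau σ₀ (τ * σ₀) else 0)
    rw [kendallTau_center]
    simp [Equiv.Perm.mul_apply, Equiv.Perm.apply_inv_self]
  unfold mallowsProb
  rw [hnum, hZ]

end MallowsGapAux

theorem mallows_inversion_prob_depends_only_on_gap (N : ℕ) (φ : ℝ)
    (hφ0 : 0 < φ) (hφ1 : φ < 1) (σ₀ : Equiv.Perm (Fin N))
    (i₁ j₁ i₂ j₂ : Fin N) (h₁ : j₁ < i₁) (h₂ : j₂ < i₂)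
    (hgap : (i₁ : ℕ) - (j₁ : ℕ) = (i₂ : ℕ) - (j₂ : ℕ)) :
    mallowsProb N φ σ₀ (fun σ => σ (σ₀⁻¹ j₁) < σ (σ₀⁻¹ i₁)) =
      mallowsProb N φ σ₀ (fun σ => σ (σ₀⁻¹ j₂) < σ (σ₀⁻¹ i₂)) := by
  classical
  open MallowsGapAux in
  have h₁' : (j₁ : ℕ) < i₁ := h₁
  have h₂' : (j₂ : ℕ) < i₂ := h₂
  set m : ℕ := (i₁ : ℕ) - (j₁ : ℕ) + 1 with hm
  have hm2 : (i₂ : ℕ) - (j₂ : ℕ) + 1 = m := by omega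
  have h0 : 0 < m := by omega
  have hjm₁ : (j₁ : ℕ) + m ≤ N := by have := i₁.isLt; omega
  have hjm₂ : (j₂ : ℕ) + m ≤ N := by have := i₂.isLt; omega
  have hp₁0 : pos (j₁ : ℕ) m hjm₁ ⟨0, h0⟩ = j₁ := by
    ext; show (j₁ : ℕ) + 0 = (j₁ : ℕ); omega
  have hp₁1 : pos (j₁ : ℕ) m hjm₁ ⟨m - 1, by omega⟩ = i₁ := by
    ext; show (j₁ : ℕ) + (m - 1) = (i₁ : ℕ); omega
  have hp₂0 : pos (j₂ : ℕ) m hjm₂ ⟨0, h0⟩ = j₂ := by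
    ext; show (j₂ : ℕ) + 0 = (j₂ : ℕ); omega
  have hp₂1 : pos (j₂ : ℕ) m hjm₂ ⟨m - 1, by omega⟩ = i₂ := by
    ext; show (j₂ : ℕ) + (m - 1) = (i₂ : ℕ); omega
  have e₁ := ratio_eq (j₁ : ℕ) m hjm₁ φ hφ0 h0
  have e₂ := ratio_eq (j₂ : ℕ) m hjm₂ φ hφ0 h0
  rw [hp₁0, hp₁1] at e₁
  rw [hp₂0, hp₂1] at e₂
  rw [reduce_prob N φ σ₀ j₁ i₁, reduce_prob N φ σ₀ j₂ i₂, e₁, e₂]
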